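/- arXiv:1107.3645 — 2 statements merged into one kernel-verified Lean document; each statement's English description precedes it below -/
import Mathlib

section
/- Let Γ₁ and Γ₂ be locally finite connected directed graphs with edge labels from a finite set, and let a ∈ Γ₁, b ∈ Γ₂ be vertices. If for every n ∈ ℕ there exists a label-preserving graph isomorphism from the ball B_n(a) onto B_n(b) sending a to b, then there exists a label-preserving isomorphism α : Γ₁ → Γ₂ with α(a) = b. -/
/-- Undirected adjacency in a labeled directed graph given by edge
relations `E l`. -/
def AdjRel {V L : Type*} (E : L → V → V → Prop) (x y : V) : Prop :=
  ∃ l, E l x y ∨ E l y x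

/-- `Within E n a y` means `d(a,y) ≤ n`: `y` is reachable from `a` by an
undirected path of length at most `n`; thus the ball `B_n(a)` is
`{y | Within E n a y}`. -/
def Within {V L : Type*} (E : L → V → V → Prop) : ℕ → V → V → Prop
  | 0, x, y => x = y
  | n + 1, x, y => Within E n x y ∨ ∃ z, Within E n x z ∧ AdjRel E z y

/-- A labeled directed graph is locally finite if every vertex has only
finitely many in- and out-neighbors (over all labels). -/
def LocallyFiniteGraph {V L : Type*} (E : L → V → V → Prop) : Prop :=
  ∀ v : V, {w : V | AdjRel E v w}.Finite

/-- A labeled directed graph is connected if any two vertices are joined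
by an undirected path. -/
def ConnectedGraph {V L : Type*} (E : L → V → V → Prop) : Prop :=
  ∀ v w : V, ∃ n, Within E n v w

theorem Within.self {V L : Type*} (E : L → V → V → Prop) (a : V) :
    ∀ n : ℕ, Within E n a a
  | 0 => rfl
  | n + 1 => Or.inl (Within.self E a n)

section Aux

variable {V V₁ V₂ L : Type*}

theorem within_mono {E : L → V → V → Prop} {n m : ℕ} (hnm : n ≤ m) {a y : V}
    (h : Within E n a y) : Within E m a y := by
  induction hnm with
  | refl => exact h
  | step _ ih => exact Or.inl ih

theorem ball_finite {E : L → V → V → Prop} (hlf : LocallyFiniteGraph E) (a : V) :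
    ∀ n : ℕ, {y : V | Within E n a y}.Finite
  | 0 => Set.Finite.subset (Set.finite_singleton a) (fun y hy => by
      simp only [Set.mem_singleton_iff]; exact hy.symm)
  | n + 1 => by
    have h1 := ball_finite hlf a n
    refine Set.Finite.subset (h1.union (h1.biUnion fun z _ => hlf z)) ?_
    rintro y (h | ⟨z, hz, hadj⟩)
    · exact Or.inl h
    · exact Or.inr (Set.mem_biUnion hz hadj)

theorem map_within {E₁ : L → V₁ → V₁ → Prop} {E₂ : L → V₂ → V₂ → Prop}
    {a : V₁} {b : V₂} {m : ℕ}
    (e : {y : V₁ // Within E₁ m a y} ≃ {y : V₂ // Within E₂ m b y})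
    (ha : (e ⟨a, Within.self E₁ a m⟩ : V₂) = b)
    (hedge : ∀ (l : L) (x y : {y : V₁ // Within E₁ m a y}),
      E₁ l x y ↔ E₂ l (e x) (e y)) :
    ∀ (n : ℕ) (hnm : n ≤ m) (y : V₁) (hy : Within E₁ n a y),
      Within E₂ n b (e ⟨y, within_mono hnm hy⟩ : V₂) := by
  intro n
  induction n with
  | zero =>
    intro hnm y hy
    cases hy
    exact ha.symm
  | succ n ih =>
    intro hnm y hy
    rcases hy with h | ⟨z, hz, hadj⟩
    · exact Or.inl (ih (Nat.le_of_succ_le hnm) y h)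
    · refine Or.inr ⟨(e ⟨z, within_mono hnm (Or.inl hz)⟩ : V₂),
        ih (Nat.le_of_succ_le hnm) z hz, ?_⟩
      obtain ⟨l, h | h⟩ := hadj
      · exact ⟨l, Or.inl ((hedge l _ _).1 h)⟩
      · exact ⟨l, Or.inr ((hedge l _ _).1 h)⟩

/-- A partial isomorphism: an isomorphism of the balls of radius `n`. -/
structure PartIso (E₁ : L → V₁ → V₁ → Prop) (E₂ : L → V₂ → V₂ → Prop)
    (a : V₁) (b : V₂) (n : ℕ) where
  e : {y : V₁ // Within E₁ n a y} ≃ {y : V₂ // Within E₂ n b y}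
  ha : (e ⟨a, Within.self E₁ a n⟩ : V₂) = b
  hedge : ∀ (l : L) (x y : {y : V₁ // Within E₁ n a y}), E₁ l x y ↔ E₂ l (e x) (e y)

variable {E₁ : L → V₁ → V₁ → Prop} {E₂ : L → V₂ → V₂ → Prop} {a : V₁} {b : V₂} {n m k : ℕ}

theorem PartIso.ext' {g₁ g₂ : PartIso E₁ E₂ a b n} (h : g₁.e = g₂.e) : g₁ = g₂ := by
  cases g₁; cases g₂; cases h; rfl

theorem PartIso.ha' (g : PartIso E₁ E₂ a b n) :
    (g.e.symm ⟨b, Within.self E₂ b n⟩ : V₁) = a := by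
  have h : (⟨b, Within.self E₂ b n⟩ : {y : V₂ // Within E₂ n b y}) =
      g.e ⟨a, Within.self E₁ a n⟩ := Subtype.ext g.ha.symm
  rw [h, Equiv.symm_apply_apply]

theorem PartIso.hedge' (g : PartIso E₁ E₂ a b n) :
    ∀ (l : L) (x y : {y : V₂ // Within E₂ n b y}),
      E₂ l x y ↔ E₁ l (g.e.symm x) (g.e.symm y) := by
  intro l x y
  have := (g.hedge l (g.e.symm x) (g.e.symm y)).symm
  rwa [Equiv.apply_symm_apply, Equiv.apply_symm_apply] at this

/-- Restriction of a partial isomorphism to a smaller ball. -/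
def PartIso.restrict (g : PartIso E₁ E₂ a b m) (hnm : n ≤ m) : PartIso E₁ E₂ a b n where
  e :=
    { toFun := fun y => ⟨(g.e ⟨y.1, within_mono hnm y.2⟩ : V₂),
        map_within g.e g.ha g.hedge n hnm y.1 y.2⟩
      invFun := fun w => ⟨(g.e.symm ⟨w.1, within_mono hnm w.2⟩ : V₁),
        map_within g.e.symm g.ha' g.hedge' n hnm w.1 w.2⟩
      left_inv := fun y => Subtype.ext (by
        have h := congrArg Subtype.val (g.e.symm_apply_apply ⟨y.1, within_mono hnm y.2⟩)
        exact h)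
      right_inv := fun w => Subtype.ext (by
        have h := congrArg Subtype.val (g.e.apply_symm_apply ⟨w.1, within_mono hnm w.2⟩)
        exact h) }
  ha := g.ha
  hedge := fun l x y => g.hedge l ⟨x.1, within_mono hnm x.2⟩ ⟨y.1, within_mono hnm y.2⟩

theorem PartIso.restrict_restrict (g : PartIso E₁ E₂ a b k) (hnm : n ≤ m) (hmk : m ≤ k) :
    (g.restrict hmk).restrict hnm = g.restrict (hnm.trans hmk) :=
  PartIso.ext' (Equiv.ext fun y => Subtype.ext rfl)

theorem PartIso.restrict_self (g : PartIso E₁ E₂ a b n) :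
    g.restrict le_rfl = g :=
  PartIso.ext' (Equiv.ext fun y => Subtype.ext rfl)

open CategoryTheory in
/-- The inverse system of partial isomorphisms. -/
def partIsoSystem (E₁ : L → V₁ → V₁ → Prop) (E₂ : L → V₂ → V₂ → Prop)
    (a : V₁) (b : V₂) : ℕᵒᵖ ⥤ Type _ where
  obj n := PartIso E₁ E₂ a b n.unop
  map {n m} f := TypeCat.ofHom fun (g : PartIso E₁ E₂ a b n.unop) => g.restrict (leOfHom f.unop)
  map_id n := by ext g; exact PartIso.restrict_self g
  map_comp {n m k} f h := by
    ext g; exact (PartIso.restrict_restrict g (leOfHom h.unop) (leOfHom f.unop)).symm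

end Aux

/-- Let `Γ₁`, `Γ₂` be locally finite connected directed graphs with edge
labels from a finite set `L`, and `a ∈ Γ₁`, `b ∈ Γ₂`.  If for every `n`
there is a label-preserving isomorphism from the ball `B_n(a)` onto
`B_n(b)` sending `a` to `b`, then there is a label-preserving isomorphism
`α : Γ₁ → Γ₂` with `α a = b`. -/
theorem ball_isomorphisms_extend {V₁ V₂ L : Type*} [Finite L]
    (E₁ : L → V₁ → V₁ → Prop) (E₂ : L → V₂ → V₂ → Prop)
    (hlf₁ : LocallyFiniteGraph E₁) (hlf₂ : LocallyFiniteGraph E₂)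
    (hc₁ : ConnectedGraph E₁) (hc₂ : ConnectedGraph E₂)
    (a : V₁) (b : V₂)
    (hballs : ∀ n : ℕ, ∃ e : {y : V₁ // Within E₁ n a y} ≃ {y : V₂ // Within E₂ n b y},
      (e ⟨a, Within.self E₁ a n⟩ : V₂) = b ∧
      ∀ (l : L) (x y : {y : V₁ // Within E₁ n a y}),
        E₁ l x y ↔ E₂ l (e x) (e y)) :
    ∃ α : V₁ ≃ V₂, α a = b ∧ ∀ (l : L) (x y : V₁), E₁ l x y ↔ E₂ l (α x) (α y) := by
  classical
  -- the inverse system is finite and nonempty in each degree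
  haveI : ∀ n : ℕᵒᵖ, Finite ((partIsoSystem E₁ E₂ a b).obj n) := by
    intro n
    haveI : Finite {y : V₁ // Within E₁ n.unop a y} := (ball_finite hlf₁ a n.unop).to_subtype
    haveI : Finite {y : V₂ // Within E₂ n.unop b y} := (ball_finite hlf₂ b n.unop).to_subtype
    exact Finite.of_injective (fun g : PartIso E₁ E₂ a b n.unop => g.e)
      (fun g₁ g₂ h => PartIso.ext' h)
  haveI : ∀ n : ℕᵒᵖ, Nonempty ((partIsoSystem E₁ E₂ a b).obj n) := by
    intro n
    obtain ⟨e, h1, h2⟩ := hballs n.unop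
    exact ⟨⟨e, h1, h2⟩⟩
  obtain ⟨u, hu⟩ := nonempty_sections_of_finite_inverse_system (partIsoSystem E₁ E₂ a b)
  set g : ∀ n : ℕ, PartIso E₁ E₂ a b n := fun n => u (Opposite.op n) with hg
  have compat : ∀ {n m : ℕ} (hnm : n ≤ m), (g m).restrict hnm = g n := by
    intro n m hnm
    exact @hu (Opposite.op m) (Opposite.op n) (CategoryTheory.homOfLE hnm).op
  -- value lemmas
  have val_eq : ∀ {n m : ℕ} (hnm : n ≤ m) (x : V₁) (h : Within E₁ n a x),
      ((g n).e ⟨x, h⟩ : V₂) = ((g m).e ⟨x, within_mono hnm h⟩ : V₂) := by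
    intro n m hnm x h
    rw [← compat hnm]
    rfl
  have val_eq' : ∀ {n m : ℕ} (hnm : n ≤ m) (y : V₂) (h : Within E₂ n b y),
      ((g n).e.symm ⟨y, h⟩ : V₁) = ((g m).e.symm ⟨y, within_mono hnm h⟩ : V₁) := by
    intro n m hnm y h
    rw [← compat hnm]
    rfl
  choose f hf using hc₁ a
  choose f' hf' using hc₂ b
  set α : V₁ → V₂ := fun x => ((g (f x)).e ⟨x, hf x⟩ : V₂) with hα
  set β : V₂ → V₁ := fun y => ((g (f' y)).e.symm ⟨y, hf' y⟩ : V₁) with hβ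
  have αval : ∀ (n : ℕ) (x : V₁) (h : Within E₁ n a x), α x = ((g n).e ⟨x, h⟩ : V₂) := by
    intro n x h
    show ((g (f x)).e ⟨x, hf x⟩ : V₂) = ((g n).e ⟨x, h⟩ : V₂)
    rw [val_eq (le_max_left (f x) n) x (hf x), val_eq (le_max_right (f x) n) x h]
  have βval : ∀ (n : ℕ) (y : V₂) (h : Within E₂ n b y), β y = ((g n).e.symm ⟨y, h⟩ : V₁) := by
    intro n y h
    show ((g (f' y)).e.symm ⟨y, hf' y⟩ : V₁) = ((g n).e.symm ⟨y, h⟩ : V₁)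
    rw [val_eq' (le_max_left (f' y) n) y (hf' y), val_eq' (le_max_right (f' y) n) y h]
  have hleft : ∀ x : V₁, β (α x) = x := by
    intro x
    have hw : Within E₂ (f x) b (α x) := ((g (f x)).e ⟨x, hf x⟩).2
    rw [βval (f x) (α x) hw]
    have : (⟨α x, hw⟩ : {y : V₂ // Within E₂ (f x) b y}) = (g (f x)).e ⟨x, hf x⟩ :=
      Subtype.ext rfl
    rw [this, Equiv.symm_apply_apply]
  have hright : ∀ y : V₂, α (β y) = y := by
    intro y
    have hw : Within E₁ (f' y) a (β y) := ((g (f' y)).e.symm ⟨y, hf' y⟩).2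
    rw [αval (f' y) (β y) hw]
    have : (⟨β y, hw⟩ : {x : V₁ // Within E₁ (f' y) a x}) = (g (f' y)).e.symm ⟨y, hf' y⟩ :=
      Subtype.ext rfl
    rw [this, Equiv.apply_symm_apply]
  refine ⟨⟨α, β, hleft, hright⟩, ?_, ?_⟩
  · rw [show (⟨α, β, hleft, hright⟩ : V₁ ≃ V₂) a = α a from rfl,
      αval 0 a (Within.self E₁ a 0)]
    exact (g 0).ha
  · intro l x y
    set n := max (f x) (f y) with hn
    have hx : Within E₁ n a x := within_mono (le_max_left _ _) (hf x)
    have hy : Within E₁ n a y := within_mono (le_max_right _ _) (hf y)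
    have := (g n).hedge l ⟨x, hx⟩ ⟨y, hy⟩
    rwa [← αval n x hx, ← αval n y hy] at this
end

section
/- Let (M, ·) be a monoid whose elements are strings in Σ* with the domain FA recognizable and the graph of multiplication FA recognizable. Then there exists a constant C such that for all m₁, …, m_n ∈ M: |m₁ · m₂ · ⋯ · m_n| ≤ max{|mᵢ| : 1 ≤ i ≤ n} + C · log₂(n). -/
/-- The convolution `⊗(w₁,…,w_k)` of a tuple of strings over `S` (with
`none` as the padding symbol `⋄`). -/
def conv {S : Type*} {k : ℕ} (w : Fin k → List S) : List (Fin k → Option S) :=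
  (List.range (Finset.univ.sup fun i => (w i).length)).map fun j => fun i => (w i)[j]?

lemma reduceOption_of_all_none {S : Type*} {l : List (Option S)} (h : ∀ x ∈ l, x = none) :
    l.reduceOption = [] := by
  induction l with
  | nil => rfl
  | cons a t ih =>
    have := h a List.mem_cons_self
    subst this
    simp [ih fun x hx => h x (List.mem_cons_of_mem _ hx)]

lemma reduceOption_map_some {S : Type*} (l : List S) : (l.map some).reduceOption = l := by
  induction l with
  | nil => rfl
  | cons a t ih => simp [ih]

lemma range_map_getElem? {S : Type*} (l : List S) {L : ℕ} (h : l.length ≤ L) :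
    ((List.range L).map (fun j => l[j]?)).reduceOption = l := by
  obtain ⟨k, rfl⟩ := Nat.exists_eq_add_of_le h
  rw [List.range_add, List.map_append, List.reduceOption_append, List.map_map]
  have h1 : (List.range l.length).map (fun j => l[j]?) = l.map some := by
    apply List.ext_getElem <;> simp
  have h2 : ((List.range k).map ((fun j => l[j]?) ∘ (l.length + ·))).reduceOption = [] := by
    apply reduceOption_of_all_none
    intro x hx
    simp only [List.mem_map, Function.comp] at hx
    obtain ⟨j, _, rfl⟩ := hx
    exact List.getElem?_eq_none (Nat.le_add_right _ _)
  rw [h1, h2, reduceOption_map_some, List.append_nil]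

lemma conv_extract {S : Type*} {k : ℕ} (w : Fin k → List S) (i : Fin k) :
    ((conv w).map (fun f => f i)).reduceOption = w i := by
  rw [conv, List.map_map]
  exact range_map_getElem? _ (Finset.le_sup (f := fun i => (w i).length) (Finset.mem_univ i))

lemma conv_length {S : Type*} {k : ℕ} (w : Fin k → List S) :
    (conv w).length = Finset.univ.sup fun i => (w i).length := by
  simp [conv]

lemma conv_drop_none {S : Type*} {k : ℕ} (w : Fin k → List S) (i : Fin k) {m : ℕ}
    (h : (w i).length ≤ m) : ∀ e ∈ (conv w).drop m, e i = none := by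
  intro e he
  rw [List.mem_iff_getElem] at he
  obtain ⟨j, hj, rfl⟩ := he
  rw [List.getElem_drop]
  unfold conv
  simp only [conv, List.getElem_map, List.getElem_range]
  exact List.getElem?_eq_none (h.trans (Nat.le_add_right _ _))

lemma constant_growth {S : Type*} (M : Set (List S)) (mul : List S → List S → List S)
    {σ : Type} [Fintype σ] (A : DFA (Fin 3 → Option S) σ)
    (hA : A.accepts = {c : List (Fin 3 → Option S) |
        ∃ u ∈ M, ∃ v ∈ M, c = conv ![u, v, mul u v]})
    {u v : List S} (hu : u ∈ M) (hv : v ∈ M) :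
    (mul u v).length ≤ max u.length v.length + Fintype.card σ := by
  by_contra hlen
  push_neg at hlen
  set w := mul u v with hw
  set m := max u.length v.length with hm
  set C := Fintype.card σ with hC
  -- the convolution
  set x := conv ![u, v, w] with hx
  have hxmem : x ∈ A.accepts := by rw [hA]; exact ⟨u, hu, v, hv, rfl⟩
  have hu2 : (![u, v, w] : Fin 3 → List S) 0 = u := rfl
  have hv2 : (![u, v, w] : Fin 3 → List S) 1 = v := rfl
  have hw2 : (![u, v, w] : Fin 3 → List S) 2 = w := rfl
  have hulen : u.length ≤ m := le_max_left _ _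
  have hvlen : v.length ≤ m := le_max_right _ _
  have hmw : m ≤ w.length := le_of_lt (lt_of_le_of_lt (Nat.le_add_right _ _) hlen)
  have hxlen : x.length = w.length := by
    rw [hx, conv_length]
    apply le_antisymm
    · apply Finset.sup_le
      intro i _
      fin_cases i
      · exact hulen.trans hmw
      · exact hvlen.trans hmw
      · exact le_rfl
    · exact Finset.le_sup (f := fun i => ((![u, v, w] : Fin 3 → List S) i).length)
        (Finset.mem_univ (2 : Fin 3))
  set p := x.take m with hp
  set t := x.drop m with ht
  have hpt : x = p ++ t := (List.take_append_drop m x).symm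
  have htlen : C ≤ t.length := by
    rw [ht, List.length_drop, hxlen]
    omega
  have heval : A.evalFrom (A.eval p) t = A.eval x := by
    conv_rhs => rw [hpt]
    exact (A.evalFrom_of_append _ _ _).symm
  obtain ⟨q, a, b, c, htabc, -, hbne, hqa, hqb, hqc⟩ := A.evalFrom_split htlen heval
  set x' := p ++ a ++ c with hx'
  have hx'mem : x' ∈ A.accepts := by
    rw [DFA.mem_accepts]
    have : A.eval x' = A.eval x := by
      have hqa' : A.evalFrom (A.evalFrom A.start p) a = q := hqa
      rw [hx', DFA.eval, A.evalFrom_of_append, A.evalFrom_of_append, hqa', hqc]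
      rfl
    rw [this]
    exact hxmem
  rw [hA] at hx'mem
  obtain ⟨u', hu', v', hv', hconv⟩ := hx'mem
  -- removed part maps to none in coordinates 0 and 1
  have hnone : ∀ i : Fin 3, ((![u, v, w] : Fin 3 → List S) i).length ≤ m →
      ((x'.map (fun f => f i)).reduceOption = (x.map (fun f => f i)).reduceOption) := by
    intro i hi
    have hb : ∀ e ∈ b, e i = none := fun e he =>
      conv_drop_none ![u, v, w] i hi e (by rw [← ht, htabc]; simp [he])
    have : x = p ++ a ++ b ++ c := by rw [hpt, htabc]; simp
    rw [this, hx']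
    simp only [List.map_append, List.reduceOption_append]
    rw [reduceOption_of_all_none (l := b.map fun f => f i) ?_]
    · simp
    · intro y hy
      obtain ⟨e, he, rfl⟩ := List.mem_map.mp hy
      exact hb e he
  have hu'eq : u' = u := by
    have h1 := conv_extract ![u', v', mul u' v'] 0
    have h2 := conv_extract ![u, v, w] 0
    rw [show (![u', v', mul u' v'] : Fin 3 → List S) 0 = u' from rfl] at h1
    rw [← hconv] at h1
    rw [hu2] at h2
    rw [← h1, ← h2]
    exact hnone 0 (by rw [hu2]; exact hulen)
  have hv'eq : v' = v := by
    have h1 := conv_extract ![u', v', mul u' v'] 1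
    have h2 := conv_extract ![u, v, w] 1
    rw [show (![u', v', mul u' v'] : Fin 3 → List S) 1 = v' from rfl] at h1
    rw [← hconv] at h1
    rw [hv2] at h2
    rw [← h1, ← h2]
    exact hnone 1 (by rw [hv2]; exact hvlen)
  subst hu'eq hv'eq
  have : x' = x := by rw [hconv, hx, hw]
  have hlt : x'.length < x.length := by
    rw [hx', hpt, htabc]
    simp only [List.length_append]
    have : 0 < b.length := List.length_pos_iff.mpr hbne
    omega
  rw [this] at hlt
  exact lt_irrefl _ hlt


section
variable {S : Type*} (M : Set (List S)) (mul : List S → List S → List S)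

lemma foldl_mem (hclosed : ∀ u ∈ M, ∀ v ∈ M, mul u v ∈ M) :
    ∀ (l : List (List S)) (m : List S), m ∈ M → (∀ v ∈ l, v ∈ M) → l.foldl mul m ∈ M := by
  intro l
  induction l with
  | nil => intro m hm _; exact hm
  | cons h t ih =>
    intro m hm hl
    exact ih _ (hclosed _ hm _ (hl h List.mem_cons_self))
      fun v hv => hl v (List.mem_cons_of_mem _ hv)

lemma foldl_mul_assoc (hclosed : ∀ u ∈ M, ∀ v ∈ M, mul u v ∈ M)
    (hassoc : ∀ u ∈ M, ∀ v ∈ M, ∀ w ∈ M, mul (mul u v) w = mul u (mul v w)) :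
    ∀ (l : List (List S)) (a b : List S), a ∈ M → b ∈ M → (∀ v ∈ l, v ∈ M) →
      l.foldl mul (mul a b) = mul a (l.foldl mul b) := by
  intro l
  induction l with
  | nil => intro a b _ _ _; rfl
  | cons c t ih =>
    intro a b ha hb hl
    have hc : c ∈ M := hl c List.mem_cons_self
    have ht : ∀ v ∈ t, v ∈ M := fun v hv => hl v (List.mem_cons_of_mem _ hv)
    simp only [List.foldl_cons]
    rw [hassoc a ha b hb c hc, ih a (mul b c) ha (hclosed _ hb _ hc) ht]

end

lemma foldr_max_append (x y : List ℕ) :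
    (x ++ y).foldr max 0 = max (x.foldr max 0) (y.foldr max 0) := by
  induction x with
  | nil => simp
  | cons a t ih => simp [ih, max_assoc]

lemma clog_le_two_mul_log (n : ℕ) : Nat.clog 2 n ≤ 2 * Nat.log 2 n := by
  rcases Nat.lt_or_ge n 2 with h | h
  · interval_cases n <;> simp
  · have h1 : Nat.clog 2 n ≤ Nat.log 2 n + 1 :=
      (Nat.clog_le_iff_le_pow one_lt_two).mpr (Nat.lt_pow_succ_log_self one_lt_two n).le
    have h2 : 1 ≤ Nat.log 2 n := Nat.log_pos one_lt_two h
    omega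

lemma key_bound {S : Type*} (M : Set (List S)) (mul : List S → List S → List S)
    (hclosed : ∀ u ∈ M, ∀ v ∈ M, mul u v ∈ M)
    (hassoc : ∀ u ∈ M, ∀ v ∈ M, ∀ w ∈ M, mul (mul u v) w = mul u (mul v w))
    (C₀ : ℕ) (hC₀ : ∀ u ∈ M, ∀ v ∈ M, (mul u v).length ≤ max u.length v.length + C₀) :
    ∀ (n : ℕ) (m : List S) (l : List (List S)), l.length + 1 = n → m ∈ M →
      (∀ v ∈ l, v ∈ M) →
      (l.foldl mul m).length ≤ ((m :: l).map List.length).foldr max 0 + C₀ * Nat.clog 2 n := by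
  intro n
  induction n using Nat.strong_induction_on with
  | _ n ih =>
    intro m l hn hm hl
    rcases l with _ | ⟨h, t⟩
    · simp only [List.length_nil, zero_add] at hn
      subst hn
      simp
    · -- n ≥ 2
      have hn2 : 2 ≤ n := by simp at hn; omega
      set a := n / 2 with ha
      have ha1 : 1 ≤ a := by omega
      have hlen : (h :: t).length + 1 = n := hn
      -- split l = (h::t) into take (a-1) and drop (a-1)
      set l := h :: t with hldef
      have hsplit : l = l.take (a - 1) ++ l.drop (a - 1) := (List.take_append_drop _ _).symm
      have hdroplen : (l.drop (a - 1)).length = n - a := by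
        rw [List.length_drop]
        omega
      have hdropne : l.drop (a - 1) ≠ [] := by
        intro hemp
        rw [hemp] at hdroplen
        simp at hdroplen
        omega
      obtain ⟨h₂, t₂, hht⟩ := List.exists_cons_of_ne_nil hdropne
      have hmemtake : ∀ v ∈ l.take (a - 1), v ∈ M := fun v hv =>
        hl v (List.mem_of_mem_take hv)
      have hmemdrop : ∀ v ∈ l.drop (a - 1), v ∈ M := fun v hv =>
        hl v (List.mem_of_mem_drop hv)
      have hh₂ : h₂ ∈ M := hmemdrop h₂ (by rw [hht]; exact List.mem_cons_self)
      have hmemt₂ : ∀ v ∈ t₂, v ∈ M := fun v hv =>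
        hmemdrop v (by rw [hht]; exact List.mem_cons_of_mem _ hv)
      set A := (l.take (a - 1)).foldl mul m with hA
      set B := t₂.foldl mul h₂ with hB
      have hAmem : A ∈ M := foldl_mem M mul hclosed _ _ hm hmemtake
      have hBmem : B ∈ M := foldl_mem M mul hclosed _ _ hh₂ hmemt₂
      have hfold : l.foldl mul m = mul A B := by
        conv_lhs => rw [hsplit]
        rw [List.foldl_append, hht, List.foldl_cons, ← hA]
        exact foldl_mul_assoc M mul hclosed hassoc t₂ A h₂ hAmem hh₂ hmemt₂
      -- apply IH to both halves
      have hnt : t.length + 2 = n := by rw [hldef, List.length_cons] at hn; omega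
      have htakelen : (l.take (a - 1)).length = a - 1 := by
        rw [List.length_take]
        simp only [hldef, List.length_cons]
        omega
      have ihA := ih a (by omega) m (l.take (a - 1)) (by rw [htakelen]; omega) hm hmemtake
      have ht₂len : t₂.length + 1 = n - a := by
        rw [hht] at hdroplen; simpa using hdroplen
      have ihB := ih (n - a) (by omega) h₂ t₂ ht₂len hh₂ hmemt₂
      -- max over sublists
      have hmapsplit : ((m :: l).map List.length) =
          ((m :: l.take (a - 1)).map List.length) ++ ((h₂ :: t₂).map List.length) := by
        rw [← List.map_append]
        congr 1
        rw [← hht]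
        simp only [List.cons_append]
        rw [← hsplit]
      set F := ((m :: l).map List.length).foldr max 0 with hF
      have hFmax : F = max (((m :: l.take (a - 1)).map List.length).foldr max 0)
          (((h₂ :: t₂).map List.length).foldr max 0) := by
        rw [hF, hmapsplit, foldr_max_append]
      -- clog arithmetic
      have hclogn : Nat.clog 2 n = Nat.clog 2 ((n + 1) / 2) + 1 := by
        rw [Nat.clog_of_two_le one_lt_two hn2, show n + 2 - 1 = n + 1 from by omega]
      have hca : Nat.clog 2 a ≤ Nat.clog 2 ((n + 1) / 2) :=
        Nat.clog_mono_right _ (by omega)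
      have hcb : Nat.clog 2 (n - a) ≤ Nat.clog 2 ((n + 1) / 2) :=
        Nat.clog_mono_right _ (by omega)
      have hmul := hC₀ A hAmem B hBmem
      have hA' : A.length ≤ F + C₀ * Nat.clog 2 ((n + 1) / 2) :=
        ihA.trans (add_le_add (by rw [hFmax]; exact le_max_left _ _)
          (Nat.mul_le_mul_left _ hca))
      have hB' : B.length ≤ F + C₀ * Nat.clog 2 ((n + 1) / 2) :=
        ihB.trans (add_le_add (by rw [hFmax]; exact le_max_right _ _)
          (Nat.mul_le_mul_left _ hcb))
      rw [hfold]
      calc (mul A B).length ≤ max A.length B.length + C₀ := hmul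
        _ ≤ F + C₀ * Nat.clog 2 ((n + 1) / 2) + C₀ :=
            Nat.add_le_add_right (max_le hA' hB') _
        _ ≤ F + C₀ * Nat.clog 2 n := by
            rw [hclogn, Nat.mul_add, Nat.mul_one]
            omega

/-- Let `(M, ·)` be a monoid whose elements are strings over a finite
alphabet `S`, with FA recognizable domain and FA recognizable graph of
multiplication.  Then there is a constant `C` such that for all
`m₁, …, m_n ∈ M` (`n ≥ 1`, given as a head `m` and tail `l`):
`|m₁ ⋯ m_n| ≤ max |mᵢ| + C · log₂ n`. -/
theorem automatic_monoid_log_growth {S : Type*} [Fintype S]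
    (M : Set (List S)) (mul : List S → List S → List S)
    (hclosed : ∀ u ∈ M, ∀ v ∈ M, mul u v ∈ M)
    (hassoc : ∀ u ∈ M, ∀ v ∈ M, ∀ w ∈ M, mul (mul u v) w = mul u (mul v w))
    (hdom : Language.IsRegular M)
    (hreg : Language.IsRegular
      {c : List (Fin 3 → Option S) |
        ∃ u ∈ M, ∃ v ∈ M, c = conv ![u, v, mul u v]}) :
    ∃ C : ℕ, ∀ (m : List S) (l : List (List S)), m ∈ M → (∀ v ∈ l, v ∈ M) →
      (l.foldl mul m).length ≤
        ((m :: l).map List.length).foldr max 0 + C * Nat.log 2 (l.length + 1) := by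
  obtain ⟨σ, hσ, A, hA⟩ := hreg
  haveI := hσ
  refine ⟨2 * Fintype.card σ, fun m l hm hl => ?_⟩
  have hC₀ : ∀ u ∈ M, ∀ v ∈ M, (mul u v).length ≤ max u.length v.length + Fintype.card σ :=
    fun u hu v hv => constant_growth M mul A hA hu hv
  have hkey := key_bound M mul hclosed hassoc (Fintype.card σ) hC₀ (l.length + 1) m l rfl hm hl
  refine hkey.trans (Nat.add_le_add_left ?_ _)
  calc Fintype.card σ * Nat.clog 2 (l.length + 1)
      ≤ Fintype.card σ * (2 * Nat.log 2 (l.length + 1)) :=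
        Nat.mul_le_mul_left _ (clog_le_two_mul_log _)
    _ = 2 * Fintype.card σ * Nat.log 2 (l.length + 1) := by ring
end
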